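/- Equivariance of the map α from the relative injectivity lemma: let G and H be groups, X a set with a left G-action, and ω : G × X → H a cocycle, i.e. ω(g_1 g_2, x) = ω(g_1, g_2·x)·ω(g_2, x) for all g_1, g_2 ∈ G and x ∈ X. Let E be a set with a left (G×H)-action. For n ≥ 1, endow functions ξ : G^{n+1} → (H × X → E) with the action ((g,h)·ξ)(g_0,…,g_n)(h′,x) = (g,h)·[ξ(g^{-1}g_0,…,g^{-1}g_n)(h^{-1}h′·ω(g^{-1},x)^{-1}, g^{-1}·x)], and functions η : G × H → (G^n × X → E) with the action ((g,h)·η)(g′,h′)(g_1,…,g_n,x) = (g,h)·[η(g^{-1}g′, h^{-1}h′)(g^{-1}g_1,…,g^{-1}g_n, g^{-1}·x)]. Define α(ξ)(g,h)(g_1,…,g_n,x) = ξ(g_1,…,g_n,g)(h·ω(g^{-1},x), x). Then α is a bijection between these function spaces and α((ḡ,h̄)·ξ) = (ḡ,h̄)·α(ξ) for all (ḡ,h̄) ∈ G×H and all ξ. -/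

import Mathlib

/-- The map `α`, `α(ξ)(g,h)(g₁,…,g_n,x) = ξ(g₁,…,g_n,g)(h·ω(g⁻¹,x), x)`. -/
def alphaMap {G H X E : Type*} [Group G] [Group H] [MulAction G X]
    (ω : G → X → H) {n : ℕ}
    (ξ : (Fin (n + 1) → G) → H × X → E) : G × H → (Fin n → G) × X → E :=
  fun p q => ξ (Fin.snoc q.1 p.1) (p.2 * ω p.1⁻¹ q.2, q.2)

/-- The `(G × H)`-action on functions `ξ : G^{n+1} → (H × X → E)`:
`((g,h)·ξ)(g₀,…,g_n)(h′,x) = (g,h)·[ξ(g⁻¹g₀,…,g⁻¹g_n)(h⁻¹h′·ω(g⁻¹,x)⁻¹, g⁻¹·x)]`. -/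
def actA {G H X E : Type*} [Group G] [Group H] [MulAction G X]
    [MulAction (G × H) E] (ω : G → X → H) {n : ℕ} (p : G × H)
    (ξ : (Fin (n + 1) → G) → H × X → E) : (Fin (n + 1) → G) → H × X → E :=
  fun gs q =>
    p • ξ (fun i => p.1⁻¹ * gs i) (p.2⁻¹ * q.1 * (ω p.1⁻¹ q.2)⁻¹, p.1⁻¹ • q.2)

/-- The `(G × H)`-action on functions `η : G × H → (Gⁿ × X → E)`:
`((g,h)·η)(g′,h′)(g₁,…,g_n,x) = (g,h)·[η(g⁻¹g′, h⁻¹h′)(g⁻¹g₁,…,g⁻¹g_n, g⁻¹·x)]`. -/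
def actB {G H X E : Type*} [Group G] [Group H] [MulAction G X]
    [MulAction (G × H) E] {n : ℕ} (p : G × H)
    (η : G × H → (Fin n → G) × X → E) : G × H → (Fin n → G) × X → E :=
  fun q r => p • η (p.1⁻¹ * q.1, p.2⁻¹ * q.2) (fun i => p.1⁻¹ * r.1 i, p.1⁻¹ • r.2)

/-- Inverse of `alphaMap`. -/
def betaMap {G H X E : Type*} [Group G] [Group H] [MulAction G X]
    (ω : G → X → H) {n : ℕ}
    (η : G × H → (Fin n → G) × X → E) : (Fin (n + 1) → G) → H × X → E :=
  fun gs q =>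
    η (gs (Fin.last n), q.1 * (ω (gs (Fin.last n))⁻¹ q.2)⁻¹) (Fin.init gs, q.2)

theorem omega_one {G H X : Type*} [Group G] [Group H] [MulAction G X]
    (ω : G → X → H)
    (hω : ∀ (g₁ g₂ : G) (x : X), ω (g₁ * g₂) x = ω g₁ (g₂ • x) * ω g₂ x)
    (x : X) : ω 1 x = 1 := by
  have h := hω 1 1 x
  simp only [mul_one, one_smul] at h
  exact (right_eq_mul.mp h)

/-- `α` is a bijection between the two function spaces and is
`(G × H)`-equivariant, provided `ω` satisfies the cocycle identity. -/
theorem alphaMap_bijective_equivariant (G H X E : Type*) [Group G] [Group H]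
    [MulAction G X] [MulAction (G × H) E] (ω : G → X → H)
    (hω : ∀ (g₁ g₂ : G) (x : X), ω (g₁ * g₂) x = ω g₁ (g₂ • x) * ω g₂ x)
    (n : ℕ) (hn : 1 ≤ n) :
    Function.Bijective
        (alphaMap (E := E) ω : ((Fin (n + 1) → G) → H × X → E) → _) ∧
      ∀ (p : G × H) (ξ : (Fin (n + 1) → G) → H × X → E),
        alphaMap ω (actA ω p ξ) = actB p (alphaMap ω ξ) := by
  constructor
  · apply Function.bijective_iff_has_inverse.mpr
    refine ⟨betaMap ω, ?_, ?_⟩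
    · intro ξ
      funext gs q
      simp [alphaMap, betaMap, Fin.snoc_init_self, mul_assoc]
    · intro η
      funext p q
      simp [alphaMap, betaMap, Fin.init_snoc, mul_assoc]
  · intro p ξ
    funext q r
    have hsnoc : (fun i : Fin (n+1) => p.1⁻¹ * (Fin.snoc r.1 q.1 : Fin (n+1) → G) i) =
        (Fin.snoc (fun i => p.1⁻¹ * r.1 i) (p.1⁻¹ * q.1) : Fin (n+1) → G) :=
      Fin.comp_snoc (fun a => p.1⁻¹ * a) r.1 q.1
    have hinv : ω q.1⁻¹ r.2 = ω (q.1⁻¹ * p.1) (p.1⁻¹ • r.2) * ω p.1⁻¹ r.2 := by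
      have := hω (q.1⁻¹ * p.1) p.1⁻¹ r.2
      simpa [mul_assoc] using this
    simp only [alphaMap, actA, actB, hsnoc, mul_inv_rev, inv_inv, smul_smul]
    congr 2
    rw [hinv]
    group
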